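/- arXiv:1604.02830 — 2 statements merged into one kernel-verified Lean document; each statement's English description precedes it below -/
import Mathlib

section
/- Let n be even, k ≥ 1, and let K ⊆ F_{2^n} be the subfield with 2^{n/2} elements and ω ∈ F_{2^n} \ K, so that every x ∈ F_{2^n} is uniquely written as x = y′ + ω y with y, y′ ∈ K. Let g_j : K → F_2 for 0 ≤ j ≤ k−1 be Boolean functions with g_j(0) = 0 for all j and Σ_{t ∈ K} ζ^{Σ_{j=0}^{k−1} 2^j g_j(t)} = 0, where ζ = e^{2πi/2^k}. Then the function f : F_{2^n} → Z_{2^k} defined by f(y′ + ω y) = Σ_{j=0}^{k−1} 2^j g_j(y′/y) (with the convention y′/y = 0 if y = 0) is g-hyperbent. -/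
open scoped BigOperators

/-- `zeta q = e^{2πi/q}`, a primitive `q`-th root of unity. -/
noncomputable def zeta (q : ℕ) : ℂ := Complex.exp (2 * Real.pi * Complex.I / (q : ℂ))

noncomputable instance (n : ℕ) : Fintype (GaloisField 2 n) := Fintype.ofFinite _

/-- The extended generalized Walsh-Hadamard transform `H_{f,i}(u)` of `f : F_{2^n} → Z_q`. -/
noncomputable def egwht (n q : ℕ) (f : GaloisField 2 n → ZMod q) (i : ℕ) (u : GaloisField 2 n) : ℂ :=
  ∑ x : GaloisField 2 n, zeta q ^ (f x).val *
    (-1 : ℂ) ^ (Algebra.trace (ZMod 2) (GaloisField 2 n) (u * x ^ i)).val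

/-- `f : F_{2^n} → Z_q` is g-hyperbent if `|H_{f,i}(u)| = 2^{n/2}` for all `i` coprime to
`2^n - 1` and all `u`. -/
def IsGHyperbent (n q : ℕ) (f : GaloisField 2 n → ZMod q) : Prop :=
  ∀ i : ℕ, Nat.Coprime i (2 ^ n - 1) → ∀ u, ‖egwht n q f i u‖ = Real.sqrt 2 ^ n

/-- The extended Walsh-Hadamard transform `W_{g,i}(u)` of a Boolean function on `F_{2^n}`. -/
noncomputable def bwhtExt (n : ℕ) (g : GaloisField 2 n → ZMod 2) (i : ℕ) (u : GaloisField 2 n) : ℂ :=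
  ∑ x : GaloisField 2 n, (-1 : ℂ) ^ (g x + Algebra.trace (ZMod 2) (GaloisField 2 n) (u * x ^ i)).val

/-- A Boolean function on `F_{2^n}` is hyperbent if `|W_{g,i}(u)| = 2^{n/2}` for all `i`
coprime to `2^n - 1` and all `u`. -/
def IsHyperbent (n : ℕ) (g : GaloisField 2 n → ZMod 2) : Prop :=
  ∀ i : ℕ, Nat.Coprime i (2 ^ n - 1) → ∀ u, ‖bwhtExt n g i u‖ = Real.sqrt 2 ^ n



lemma zeta_pow_q (q : ℕ) (hq : q ≠ 0) : zeta q ^ q = 1 := by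
  rw [zeta, ← Complex.exp_nat_mul]
  rw [mul_div_cancel₀]
  · exact Complex.exp_two_pi_mul_I
  · exact_mod_cast hq

lemma zeta_pow_mod (q : ℕ) (hq : q ≠ 0) (n : ℕ) : zeta q ^ (n % q) = zeta q ^ n := by
  conv_rhs => rw [← Nat.div_add_mod n q]
  rw [pow_add, pow_mul, zeta_pow_q q hq, one_pow, one_mul]

lemma abs_zeta_pow (q : ℕ) (n : ℕ) : ‖zeta q ^ n‖ = 1 := by
  rw [norm_pow]
  have : ‖zeta q‖ = 1 := by
    rw [zeta, Complex.norm_exp]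
    have : (2 * ↑Real.pi * Complex.I / (q:ℂ)).re = 0 := by
      simp [Complex.div_re]
    rw [this, Real.exp_zero]
  rw [this, one_pow]




lemma pow_bij {E : Type*} [Field E] [Fintype E] {i : ℕ} (hi0 : i ≠ 0)
    (hi : Nat.Coprime i (Fintype.card E - 1)) :
    Function.Bijective (fun x : E => x ^ i) := by
  have hinj : Function.Injective (fun x : E => x ^ i) := by
    intro x y hxy
    simp only at hxy
    rcases eq_or_ne x 0 with rfl | hx
    · rcases eq_or_ne y 0 with rfl | hy
      · rfl
      · exfalso; rw [zero_pow hi0] at hxy; exact pow_ne_zero i hy hxy.symm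
    · rcases eq_or_ne y 0 with rfl | hy
      · exfalso; rw [zero_pow hi0] at hxy; exact pow_ne_zero i hx hxy
      · have hcard : Nat.Coprime (Nat.card Eˣ) i := by
          rw [Nat.card_units, Nat.card_eq_fintype_card]
          exact hi.symm
        have := (powCoprime hcard).injective (a₁ := Units.mk0 x hx) (a₂ := Units.mk0 y hy) ?_
        · exact congrArg Units.val this
        · ext; simpa [powCoprime] using hxy
  exact ⟨hinj, Finite.surjective_of_injective hinj⟩

lemma zmod2_eq_one {a : ZMod 2} (h : a ≠ 0) : a = 1 := by
  revert h; revert a; decide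

lemma neg_one_pow_add_one (a : ZMod 2) : (-1:ℂ)^((a+1).val) = -(-1:ℂ)^a.val := by
  have h2 : ((1:ZMod 2)+1) = 0 := by decide
  rcases (by revert a; decide : ∀ a : ZMod 2, a = 0 ∨ a = 1) a with rfl | rfl <;> simp [h2, ZMod.val_one, ZMod.val_zero]

lemma aux_char {A : Type*} [Fintype A] [AddCommGroup A] (φ : A → ZMod 2)
    (hadd : ∀ a b, φ (a+b) = φ a + φ b) (h : ∃ a, φ a ≠ 0) :
    ∑ x, ((-1:ℂ)^(φ x).val) = 0 := by
  obtain ⟨a0, ha0⟩ := h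
  have h1 : φ a0 = 1 := zmod2_eq_one ha0
  have key : ∑ x, ((-1:ℂ)^(φ x).val) = -∑ x, ((-1:ℂ)^(φ x).val) := by
    conv_lhs => rw [← Equiv.sum_comp (Equiv.addRight a0) (fun x => ((-1:ℂ)^(φ x).val))]
    simp only [Equiv.coe_addRight]
    rw [← Finset.sum_neg_distrib]
    apply Finset.sum_congr rfl
    intro x _
    rw [hadd, h1, neg_one_pow_add_one]
  have := add_eq_zero_iff_eq_neg.mpr key
  have h2' : (2:ℂ) * ∑ x, ((-1:ℂ)^(φ x).val) = 0 := by rw [two_mul]; linear_combination this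
  exact (mul_eq_zero.mp h2').resolve_left two_ne_zero

section Main
variable {m : ℕ} (K : Subfield (GaloisField 2 (2*m))) [Fintype ↥K]

local notation "F2n" => GaloisField 2 (2*m)
local notation "Tr" => Algebra.trace (ZMod 2) (GaloisField 2 (2*m))

lemma cardF (hm : 1 ≤ m) : Fintype.card F2n = 2^(2*m) := by
  rw [← Nat.card_eq_fintype_card]
  exact GaloisField.card 2 (2*m) (by omega)

open scoped Classical in
lemma T_formula (hK : Fintype.card ↥K = 2^m) (v : F2n) :
    ∑ z : ↥K, ((-1:ℂ)^(Tr (v * (z:F2n))).val) =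
      if ∀ z : ↥K, Tr (v * (z:F2n)) = 0 then ((2:ℂ)^m) else 0 := by
  by_cases h : ∀ z : ↥K, Tr (v * (z:F2n)) = 0
  · rw [if_pos h]
    rw [Finset.sum_congr rfl (fun z _ => by rw [h z, ZMod.val_zero, pow_zero])]
    simp [hK]
  · rw [if_neg h]
    push_neg at h
    exact aux_char (fun z : ↥K => Tr (v * (z:F2n)))
      (fun a b => by push_cast [mul_add, map_add]; rfl)
      h

lemma full_char (hm : 1 ≤ m) {z : F2n} (hz : z ≠ 0) :
    ∑ v : F2n, ((-1:ℂ)^(Tr (v * z)).val) = 0 := by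
  apply aux_char (fun v : F2n => Tr (v * z))
    (fun a b => by rw [add_mul, map_add])
  -- nondegeneracy
  haveI : Algebra.IsSeparable (ZMod 2) F2n := Algebra.IsAlgebraic.isSeparable_of_perfectField
  have hnd := (traceForm_nondegenerate (ZMod 2) F2n).1 z
  by_contra hcon
  push_neg at hcon
  apply hz
  apply hnd
  intro w
  rw [Algebra.traceForm_apply]
  rw [mul_comm z w]
  exact hcon w

end Main

section D
variable {m : ℕ} (K : Subfield (GaloisField 2 (2*m))) [Fintype ↥K]
local notation "F2n" => GaloisField 2 (2*m)
local notation "Tr" => Algebra.trace (ZMod 2) (GaloisField 2 (2*m))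

open scoped Classical in
lemma card_D (hm : 1 ≤ m) (hK : Fintype.card ↥K = 2^m) :
    (Finset.univ.filter (fun v : F2n => ∀ z : ↥K, Tr (v * (z:F2n)) = 0)).card = 2^m := by
  have way1 : ∑ v : F2n, ∑ z : ↥K, ((-1:ℂ)^(Tr (v * (z:F2n))).val) =
      ((Finset.univ.filter (fun v : F2n => ∀ z : ↥K, Tr (v * (z:F2n)) = 0)).card : ℂ) * 2^m := by
    rw [Finset.sum_congr rfl (fun v _ => T_formula K hK v), ← Finset.sum_filter,
      Finset.sum_const, nsmul_eq_mul]
  have way2 : ∑ v : F2n, ∑ z : ↥K, ((-1:ℂ)^(Tr (v * (z:F2n))).val) = (2:ℂ)^(2*m) := by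
    rw [Finset.sum_comm]
    rw [Fintype.sum_eq_single (0 : ↥K) (fun z hz => full_char hm
      (by simpa using hz : (z:F2n) ≠ 0))]
    have : ∀ v : F2n, ((-1:ℂ)^(Tr (v * ((0:↥K):F2n))).val) = 1 := by
      intro v
      simp
    rw [Finset.sum_congr rfl (fun v _ => this v), Finset.sum_const, nsmul_eq_mul, mul_one,
      Finset.card_univ, cardF hm]
    push_cast
    ring
  have hc : (((Finset.univ.filter (fun v : F2n => ∀ z : ↥K, Tr (v * (z:F2n)) = 0)).card * 2^m : ℕ) : ℂ)
      = ((2^(2*m) : ℕ) : ℂ) := by push_cast; rw [← way1, way2]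
  have hnat := Nat.cast_injective (R := ℂ) hc
  have h2 : (2:ℕ)^(2*m) = 2^m * 2^m := by rw [two_mul, pow_add]
  rw [h2] at hnat
  exact Nat.eq_of_mul_eq_mul_right (by positivity) hnat

lemma exists_d (hm : 1 ≤ m) (hK : Fintype.card ↥K = 2^m) :
    ∃ d : F2n, d ≠ 0 ∧ ∀ v : F2n,
      ((∀ z : ↥K, Tr (v * (z:F2n)) = 0) ↔ ∃ c : ↥K, v = d * (c:F2n)) := by
  classical
  set D := Finset.univ.filter (fun v : F2n => ∀ z : ↥K, Tr (v * (z:F2n)) = 0) with hD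
  have hcard : D.card = 2^m := card_D K hm hK
  have hone : 1 < D.card := by
    rw [hcard]
    have : (2:ℕ)^1 ≤ 2^m := Nat.pow_le_pow_right (by norm_num) hm
    omega
  obtain ⟨d, hdD, hd0⟩ := Finset.exists_mem_ne hone 0
  have hdP : ∀ z : ↥K, Tr (d * (z:F2n)) = 0 := (Finset.mem_filter.mp hdD).2
  refine ⟨d, hd0, fun v => ⟨fun hv => ?_, ?_⟩⟩
  · -- v ∈ D = image
    have himg : Finset.image (fun c : ↥K => d * (c:F2n)) Finset.univ = D := by
      apply Finset.eq_of_subset_of_card_le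
      · intro x hx
        obtain ⟨c, _, rfl⟩ := Finset.mem_image.mp hx
        rw [hD, Finset.mem_filter]
        refine ⟨Finset.mem_univ _, fun z => ?_⟩
        rw [mul_assoc, ← Subfield.coe_mul]
        exact hdP (c * z)
      · rw [hcard, Finset.card_image_of_injective _ ?_, Finset.card_univ, hK]
        intro a b hab
        exact Subtype.ext (mul_left_cancel₀ hd0 hab)
    have : v ∈ D := by rw [hD, Finset.mem_filter]; exact ⟨Finset.mem_univ _, hv⟩
    rw [← himg] at this
    obtain ⟨c, _, hc⟩ := Finset.mem_image.mp this
    exact ⟨c, hc.symm⟩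
  · rintro ⟨c, rfl⟩ z
    rw [mul_assoc, ← Subfield.coe_mul]
    exact hdP (c * z)
end D

section Geometry
variable {m : ℕ} {K : Subfield (GaloisField 2 (2*m))} [Fintype ↥K]
local notation "F2n" => GaloisField 2 (2*m)

lemma mem_K_of_mul {ω : F2n} {w u : ↥K} (hu : (u : F2n) ≠ 0) (h : ω * u = w) : ω ∈ K := by
  have : ω = ((w / u : ↥K) : F2n) := by
    push_cast
    rw [eq_div_iff hu]
    exact h
  rw [this]
  exact SetLike.coe_mem _

lemma rep_bij {ω : F2n} (hω : ω ∉ K)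
    (hcover : ∀ x : F2n, ∃ y' y : ↥K, x = (y' : F2n) + ω * y) :
    Function.Bijective (fun p : ↥K × ↥K => (p.1 : F2n) + ω * p.2) := by
  constructor
  · rintro ⟨a, b⟩ ⟨c, d⟩ h
    simp only at h
    by_cases hbd : b = d
    · subst hbd
      have : (a : F2n) = c := by linear_combination h
      exact Prod.ext (Subtype.ext this) rfl
    · exfalso
      apply hω
      have hbd' : ((b - d : ↥K) : F2n) ≠ 0 := by
        simpa [sub_eq_zero] using fun hh => hbd (Subtype.ext hh)
      exact mem_K_of_mul (w := c - a) hbd' (by push_cast; linear_combination h)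
  · intro x
    obtain ⟨y', y, hx⟩ := hcover x
    exact ⟨(y', y), hx.symm⟩

lemma lineA {ω : F2n} (hω : ω ∉ K)
    (hcover : ∀ x : F2n, ∃ y' y : ↥K, x = (y' : F2n) + ω * y)
    {v : F2n} (hv : v ≠ 0) :
    (v ∈ K ∧ ∀ (t c : ↥K), (t : F2n) + ω ≠ v * c) ∨
    (v ∉ K ∧ ∃ t0 : ↥K, (∃ c : ↥K, (t0 : F2n) + ω = v * c) ∧
      ∀ t : ↥K, (∃ c : ↥K, (t : F2n) + ω = v * c) → t = t0) := by
  obtain ⟨y', y, hx⟩ := hcover v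
  by_cases hy : y = 0
  · left
    subst hy
    simp only [ZeroMemClass.coe_zero, mul_zero, add_zero] at hx
    subst hx
    refine ⟨SetLike.coe_mem _, fun t c h => hω ?_⟩
    exact mem_K_of_mul (w := y' * c - t) (u := 1) (by push_cast; exact one_ne_zero)
      (by push_cast; linear_combination h)
  · right
    have hyF : (y : F2n) ≠ 0 := fun h => hy (Subtype.ext (by exact_mod_cast h))
    have key : ∀ t c : ↥K, ((t : F2n) + ω = v * c) → (c : F2n) ≠ 0 := by
      intro t c hc h0
      apply hω
      rw [h0, mul_zero] at hc
      exact mem_K_of_mul (w := -t) (u := 1) (by push_cast; exact one_ne_zero)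
        (by push_cast; linear_combination hc)
    constructor
    · intro hvK
      apply hω
      exact mem_K_of_mul (w := ⟨v, hvK⟩ - y') (u := y) hyF
        (by push_cast; linear_combination -hx)
    · refine ⟨y' / y, ⟨y⁻¹, ?_⟩, ?_⟩
      · push_cast
        rw [div_eq_mul_inv, hx]
        field_simp
      · rintro t ⟨c, hc⟩
        have hc0 : (c : F2n) ≠ 0 := key t c hc
        have hd : ((y' / y : ↥K) : F2n) + ω = v * ((y⁻¹ : ↥K) : F2n) := by
          push_cast
          rw [div_eq_mul_inv, hx]
          field_simp
        push_cast at hd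
        by_cases hcc : c = y⁻¹
        · subst hcc
          have : (t : F2n) = ((y' / y : ↥K) : F2n) := by push_cast; linear_combination hc - hd
          exact Subtype.ext (by exact_mod_cast this)
        · exfalso
          apply hω
          have hne : ((c - y⁻¹ : ↥K) : F2n) ≠ 0 := by
            simpa [sub_eq_zero] using fun hh => hcc (Subtype.ext hh)
          -- v = (t - y'/y)/(c - y⁻¹) ∈ K
          have hvK : v ∈ K := by
            have : v = (((t - y' / y) / (c - y⁻¹) : ↥K) : F2n) := by
              push_cast
              rw [eq_div_iff (by push_cast at hne; exact hne)]
              push_cast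
              linear_combination hd - hc
            rw [this]
            exact SetLike.coe_mem _
          -- then ω = v * c - t ∈ K
          exact mem_K_of_mul (w := (⟨v, hvK⟩ : ↥K) * c - t) (u := 1)
            (by push_cast; exact one_ne_zero)
            (by push_cast; linear_combination hc)
end Geometry

section Count
variable {m : ℕ} {K : Subfield (GaloisField 2 (2*m))} [Fintype ↥K]
local notation "F2n" => GaloisField 2 (2*m)

lemma mem_iff_exists (w : F2n) : w ∈ K ↔ ∃ c : ↥K, (c : F2n) = w :=
  ⟨fun h => ⟨⟨w, h⟩, rfl⟩, fun ⟨c, hc⟩ => hc ▸ c.2⟩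

lemma count_lemma (hm : 1 ≤ m) (hK : Fintype.card ↥K = 2^m)
    {ω : F2n} (hω : ω ∉ K)
    (hcover : ∀ x : F2n, ∃ y' y : ↥K, x = (y' : F2n) + ω * y)
    {i : ℕ} (hi : Nat.Coprime i (2^(2*m) - 1))
    {P : F2n → Prop} {d : F2n} (hd0 : d ≠ 0)
    (hchar : ∀ v : F2n, P v ↔ ∃ c : ↥K, v = d * (c : F2n))
    {u : F2n} (hu : u ≠ 0) :
    (P u ∧ ∀ t : ↥K, ¬ P (u * ((t : F2n) + ω)^i)) ∨
    (¬ P u ∧ ∃ t0 : ↥K, P (u * ((t0 : F2n) + ω)^i) ∧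
      ∀ t : ↥K, P (u * ((t : F2n) + ω)^i) → t = t0) := by
  have hi0 : i ≠ 0 := by
    rintro rfl
    have h4 : 4 ≤ 2^(2*m) := by
      calc (4:ℕ) = 2^2 := by norm_num
      _ ≤ 2^(2*m) := Nat.pow_le_pow_right (by norm_num) (by omega)
    have := (Nat.coprime_zero_left _).mp hi
    omega
  have hiF : Nat.Coprime i (Fintype.card F2n - 1) := by rwa [cardF hm]
  have hiK : Nat.Coprime i (Fintype.card ↥K - 1) := by
    rw [hK]
    apply Nat.Coprime.coprime_dvd_right _ hi
    have h1 : (2:ℕ)^(2*m) = (2^m)^2 := by rw [mul_comm, pow_mul]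
    rw [h1]
    simpa using Nat.sub_dvd_pow_sub_pow (2^m) 1 2
  have hFbij := pow_bij (E := F2n) hi0 hiF
  have hKbij := pow_bij (E := ↥K) hi0 hiK
  set w := d⁻¹ * u with hwdef
  have hw : w ≠ 0 := mul_ne_zero (inv_ne_zero hd0) hu
  have hPu : P u ↔ w ∈ K := by
    rw [hchar, mem_iff_exists]
    refine exists_congr fun c => ?_
    rw [hwdef]
    constructor
    · rintro rfl; field_simp
    · intro h
      rw [eq_comm, inv_mul_eq_iff_eq_mul₀ hd0] at h
      exact h
  have hPt : ∀ t : ↥K, P (u * ((t : F2n) + ω)^i) ↔ w * ((t : F2n) + ω)^i ∈ K := by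
    intro t
    rw [hchar, mem_iff_exists]
    refine exists_congr fun c => ?_
    rw [hwdef, mul_assoc]
    constructor
    · intro h
      rw [eq_comm, inv_mul_eq_iff_eq_mul₀ hd0]
      exact h
    · intro h
      rw [eq_comm, inv_mul_eq_iff_eq_mul₀ hd0] at h
      exact h
  have htω : ∀ t : ↥K, (t : F2n) + ω ≠ 0 := by
    intro t h
    apply hω
    have : ω = ((-t : ↥K) : F2n) := by push_cast; linear_combination h
    rw [this]; exact SetLike.coe_mem _
  obtain ⟨v0, hv0i⟩ := hFbij.surjective w⁻¹
  simp only at hv0i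
  have hv0 : v0 ≠ 0 := by
    rintro rfl
    rw [zero_pow hi0] at hv0i
    exact inv_ne_zero hw hv0i.symm
  have claim1 : w ∈ K ↔ v0 ∈ K := by
    constructor
    · intro h
      obtain ⟨c', hc'⟩ := hKbij.surjective (⟨w, h⟩⁻¹ : ↥K)
      simp only at hc'
      have : ((c' : F2n))^i = v0^i := by
        rw [← SubmonoidClass.coe_pow, hc', hv0i]
        push_cast
        rfl
      have := hFbij.injective this
      rw [← this]; exact SetLike.coe_mem _
    · intro h
      have h1 : w⁻¹ ∈ K := by rw [← hv0i]; exact pow_mem h i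
      have := Subfield.inv_mem K h1
      rwa [inv_inv] at this
  have claim2 : ∀ t : ↥K, (w * ((t : F2n) + ω)^i ∈ K) ↔ ∃ c : ↥K, (t : F2n) + ω = v0 * c := by
    intro t
    constructor
    · intro h
      have hx0 : (⟨_, h⟩ : ↥K) ≠ 0 := by
        intro h0
        exact (mul_ne_zero hw (pow_ne_zero i (htω t))) (by simpa using Subtype.ext_iff.mp h0)
      obtain ⟨c', hc'⟩ := hKbij.surjective ⟨_, h⟩
      refine ⟨c', hFbij.injective (a₁ := (t : F2n) + ω) (a₂ := v0 * c') ?_⟩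
      show ((t : F2n) + ω)^i = (v0 * (c' : F2n))^i
      have hcoe : ((c' : F2n))^i = w * ((t : F2n) + ω)^i := by
        rw [← SubmonoidClass.coe_pow]
        exact congrArg Subtype.val hc'
      rw [mul_pow, hv0i]
      rw [hcoe]
      field_simp
    · rintro ⟨c, hc⟩
      rw [hc, mul_pow, hv0i, ← mul_assoc, mul_inv_cancel₀ hw, one_mul,
        ← SubmonoidClass.coe_pow]
      exact SetLike.coe_mem _
  rcases lineA hω hcover hv0 with ⟨hvK, hnone⟩ | ⟨hvnK, t0, ⟨c0, hc0⟩, huniq⟩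
  · left
    refine ⟨hPu.mpr (claim1.mpr hvK), fun t ht => ?_⟩
    obtain ⟨c, hc⟩ := (claim2 t).mp ((hPt t).mp ht)
    exact hnone t c hc
  · right
    refine ⟨fun h => hvnK (claim1.mp (hPu.mp h)), t0,
      (hPt t0).mpr ((claim2 t0).mpr ⟨c0, hc0⟩),
      fun t ht => huniq t ((claim2 t).mp ((hPt t).mp ht))⟩
end Count

theorem statement_7 (m k : ℕ) (hm : 1 ≤ m) (hk : 1 ≤ k)
    (K : Subfield (GaloisField 2 (2 * m))) [Fintype ↥K]
    (hK : Fintype.card ↥K = 2 ^ m)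
    (ω : GaloisField 2 (2 * m)) (hω : ω ∉ K)
    (hcover : ∀ x : GaloisField 2 (2 * m), ∃ y' y : ↥K, x = (y' : GaloisField 2 (2 * m)) + ω * y)
    (g : ℕ → ↥K → ZMod 2)
    (hg0 : ∀ j < k, g j 0 = 0)
    (hsum : ∑ t : ↥K, zeta (2 ^ k) ^ (∑ j ∈ Finset.range k, 2 ^ j * (g j t).val) = 0)
    (f : GaloisField 2 (2 * m) → ZMod (2 ^ k))
    (hf : ∀ y' y : ↥K, f ((y' : GaloisField 2 (2 * m)) + ω * y) =
      ∑ j ∈ Finset.range k, (2 ^ j : ZMod (2 ^ k)) * ((g j (y' / y)).val : ZMod (2 ^ k))) :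
    IsGHyperbent (2 * m) (2 ^ k) f := by
  classical
  intro i hi u
  set Tr := Algebra.trace (ZMod 2) (GaloisField 2 (2*m)) with hTrdef
  have hq : (2:ℕ)^k ≠ 0 := by positivity
  have hi0 : i ≠ 0 := by
    rintro rfl
    have h4 : 4 ≤ 2^(2*m) := by
      calc (4:ℕ) = 2^2 := by norm_num
      _ ≤ 2^(2*m) := Nat.pow_le_pow_right (by norm_num) (by omega)
    have := (Nat.coprime_zero_left _).mp hi
    omega
  have hiK : Nat.Coprime i (Fintype.card ↥K - 1) := by
    rw [hK]
    apply Nat.Coprime.coprime_dvd_right _ hi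
    have h1 : (2:ℕ)^(2*m) = (2^m)^2 := by rw [mul_comm, pow_mul]
    rw [h1]
    simpa using Nat.sub_dvd_pow_sub_pow (2^m) 1 2
  have hKbij := pow_bij (E := ↥K) hi0 hiK
  set a : ↥K → ℕ := fun t => ∑ j ∈ Finset.range k, 2^j * (g j t).val with ha
  -- f vanishes on K
  have hfK : ∀ y' : ↥K, f (y' : GaloisField 2 (2*m)) = 0 := by
    intro y'
    have h0 := hf y' 0
    simp only [ZeroMemClass.coe_zero, mul_zero, add_zero, div_zero] at h0
    rw [h0]
    apply Finset.sum_eq_zero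
    intro j hj
    rw [hg0 j (Finset.mem_range.mp hj), ZMod.val_zero, Nat.cast_zero, mul_zero]
  -- zeta values on the other lines
  have hfline : ∀ (t y : ↥K), y ≠ 0 →
      zeta (2^k) ^ (f ((↑(t*y) : GaloisField 2 (2*m)) + ω * ↑y)).val = zeta (2^k) ^ (a t) := by
    intro t y hy
    have h1 := hf (t*y) y
    rw [mul_div_cancel_right₀ t hy] at h1
    have h2 : f ((↑(t*y) : GaloisField 2 (2*m)) + ω * ↑y) = ((a t : ℕ) : ZMod (2^k)) := by
      rw [h1, ha]
      push_cast
      rfl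
    rw [h2, ZMod.val_natCast, zeta_pow_mod _ hq]
  set T : GaloisField 2 (2*m) → ℂ :=
    fun v => ∑ z : ↥K, ((-1:ℂ)^(Tr (v * (z : GaloisField 2 (2*m)))).val) with hT
  have hTf : ∀ v, T v = if (∀ z : ↥K, Tr (v * (z : GaloisField 2 (2*m))) = 0)
      then ((2:ℂ)^m) else 0 := fun v => T_formula K hK v
  have hzero : ∀ t : ↥K, ((-1:ℂ)^(Tr ((u * ((t : GaloisField 2 (2*m)) + ω)^i) *
      ((((0:↥K))^i : ↥K) : GaloisField 2 (2*m)))).val) = 1 := by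
    intro t
    rw [zero_pow hi0]
    simp
  -- main computation
  have hH : egwht (2*m) (2^k) f i u
      = T u + ∑ t : ↥K, zeta (2^k) ^ (a t) * T (u * ((t : GaloisField 2 (2*m)) + ω)^i) := by
    calc egwht (2*m) (2^k) f i u
        = ∑ x : GaloisField 2 (2*m), zeta (2^k) ^ (f x).val * (-1:ℂ)^(Tr (u * x ^ i)).val := rfl
      _ = ∑ p : ↥K × ↥K, zeta (2^k) ^ (f ((p.1 : GaloisField 2 (2*m)) + ω * p.2)).val *
            (-1:ℂ)^(Tr (u * ((p.1 : GaloisField 2 (2*m)) + ω * p.2) ^ i)).val :=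
        (Function.Bijective.sum_comp (rep_bij hω hcover)
          (fun x => zeta (2^k) ^ (f x).val * (-1:ℂ)^(Tr (u * x ^ i)).val)).symm
      _ = ∑ y : ↥K, ∑ y' : ↥K, zeta (2^k) ^ (f ((y' : GaloisField 2 (2*m)) + ω * y)).val *
            (-1:ℂ)^(Tr (u * ((y' : GaloisField 2 (2*m)) + ω * y) ^ i)).val := by
        rw [Fintype.sum_prod_type]
        exact Finset.sum_comm
      _ = (∑ y' : ↥K, zeta (2^k) ^ (f ((y' : GaloisField 2 (2*m)) + ω * ((0:↥K) : GaloisField 2 (2*m)))).val *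
            (-1:ℂ)^(Tr (u * ((y' : GaloisField 2 (2*m)) + ω * ((0:↥K) : GaloisField 2 (2*m))) ^ i)).val) +
          ∑ y ∈ Finset.univ.erase (0:↥K), ∑ y' : ↥K,
            zeta (2^k) ^ (f ((y' : GaloisField 2 (2*m)) + ω * y)).val *
            (-1:ℂ)^(Tr (u * ((y' : GaloisField 2 (2*m)) + ω * y) ^ i)).val :=
        (Finset.add_sum_erase _ _ (Finset.mem_univ 0)).symm
      _ = T u + ∑ t : ↥K, zeta (2 ^ k) ^ (a t) * T (u * ((t : GaloisField 2 (2*m)) + ω)^i) := by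
        congr 1
        · calc (∑ y' : ↥K, zeta (2^k) ^ (f ((y' : GaloisField 2 (2*m)) + ω * ((0:↥K) : GaloisField 2 (2*m)))).val *
              (-1:ℂ)^(Tr (u * ((y' : GaloisField 2 (2*m)) + ω * ((0:↥K) : GaloisField 2 (2*m))) ^ i)).val)
              = ∑ y' : ↥K, ((-1:ℂ)^(Tr (u * ((y'^i : ↥K) : GaloisField 2 (2*m)))).val) := by
                apply Finset.sum_congr rfl
                intro y' _
                simp only [ZeroMemClass.coe_zero, mul_zero, add_zero]
                rw [hfK y', ZMod.val_zero, pow_zero, one_mul, ← SubmonoidClass.coe_pow]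
            _ = T u := Function.Bijective.sum_comp hKbij
                (fun z : ↥K => ((-1:ℂ)^(Tr (u * (z : GaloisField 2 (2*m)))).val))
        · calc ∑ y ∈ Finset.univ.erase (0:↥K), ∑ y' : ↥K,
                zeta (2^k) ^ (f ((y' : GaloisField 2 (2*m)) + ω * y)).val *
                (-1:ℂ)^(Tr (u * ((y' : GaloisField 2 (2*m)) + ω * y) ^ i)).val
              = ∑ y ∈ Finset.univ.erase (0:↥K), ∑ t : ↥K,
                zeta (2^k) ^ (a t) *
                ((-1:ℂ)^(Tr ((u * ((t : GaloisField 2 (2*m)) + ω)^i) *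
                  ((y^i : ↥K) : GaloisField 2 (2*m)))).val) := by
                apply Finset.sum_congr rfl
                intro y hy
                have hy0 : y ≠ 0 := Finset.ne_of_mem_erase hy
                refine (Fintype.sum_bijective (fun t : ↥K => t * y)
                  (Equiv.mulRight₀ y hy0).bijective _ _ ?_).symm
                intro t
                beta_reduce
                have harg2 : ((↑(t*y) : GaloisField 2 (2*m)) + ω * ↑y)
                    = ((t : GaloisField 2 (2*m)) + ω) * (y : GaloisField 2 (2*m)) := by
                  push_cast; ring
                rw [harg2, mul_pow, ← mul_assoc, SubmonoidClass.coe_pow]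
                congr 1
                rw [← harg2]
                exact (hfline t y hy0).symm
            _ = ∑ t : ↥K, ∑ y ∈ Finset.univ.erase (0:↥K),
                zeta (2^k) ^ (a t) *
                ((-1:ℂ)^(Tr ((u * ((t : GaloisField 2 (2*m)) + ω)^i) *
                  ((y^i : ↥K) : GaloisField 2 (2*m)))).val) := Finset.sum_comm
            _ = ∑ t : ↥K, zeta (2^k) ^ (a t) *
                (T (u * ((t : GaloisField 2 (2*m)) + ω)^i) - 1) := by
                apply Finset.sum_congr rfl
                intro t _
                rw [← Finset.mul_sum]
                congr 1
                rw [Finset.sum_erase_eq_sub (Finset.mem_univ 0)]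
                beta_reduce
                rw [Function.Bijective.sum_comp hKbij
                  (fun z : ↥K => ((-1:ℂ)^(Tr ((u * ((t : GaloisField 2 (2*m)) + ω)^i) *
                    (z : GaloisField 2 (2*m)))).val)), hzero t, hT]
            _ = (∑ t : ↥K, zeta (2^k) ^ (a t) * T (u * ((t : GaloisField 2 (2*m)) + ω)^i)) -
                ∑ t : ↥K, zeta (2^k) ^ (a t) := by
                rw [← Finset.sum_sub_distrib]
                apply Finset.sum_congr rfl
                intro t _
                rw [mul_sub, mul_one]
            _ = ∑ t : ↥K, zeta (2 ^ k) ^ (a t) * T (u * ((t : GaloisField 2 (2*m)) + ω)^i) := by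
                rw [hsum, sub_zero]
  rw [hH]
  have hgoal : Real.sqrt 2 ^ (2*m) = (2:ℝ)^m := by
    rw [pow_mul, Real.sq_sqrt (by norm_num : (0:ℝ) ≤ 2)]
  rcases eq_or_ne u 0 with rfl | hu
  · have hP0 : ∀ z : ↥K, Tr ((0 : GaloisField 2 (2*m)) * (z : GaloisField 2 (2*m))) = 0 := by
      intro z; rw [zero_mul, map_zero]
    rw [hTf 0, if_pos hP0]
    have hTt : ∀ t : ↥K, T ((0 : GaloisField 2 (2*m)) * ((t : GaloisField 2 (2*m)) + ω)^i)
        = (2:ℂ)^m := by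
      intro t
      rw [hTf, if_pos]
      intro z
      rw [zero_mul, zero_mul, map_zero]
    rw [Finset.sum_congr rfl (fun t _ => by rw [hTt t]), ← Finset.sum_mul, hsum, zero_mul,
      add_zero, norm_pow, Complex.norm_two, hgoal]
  · obtain ⟨d, hd0, hchar⟩ := exists_d K hm hK
    rcases count_lemma hm hK hω hcover hi hd0 hchar hu with ⟨hPu, hnt⟩ | ⟨hPu, t0, ht0, huniq⟩
    · rw [hTf u, if_pos hPu]
      have hTt : ∀ t : ↥K, zeta (2^k) ^ (a t) *
          T (u * ((t : GaloisField 2 (2*m)) + ω)^i) = 0 := by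
        intro t
        rw [hTf, if_neg (hnt t), mul_zero]
      rw [Finset.sum_congr rfl (fun t _ => hTt t), Finset.sum_const, smul_zero, add_zero,
        norm_pow, Complex.norm_two, hgoal]
    · rw [hTf u, if_neg hPu]
      rw [Finset.sum_eq_single t0
        (fun t _ htne => by rw [hTf, if_neg (fun hP => htne (huniq t hP)), mul_zero])
        (fun h => absurd (Finset.mem_univ t0) h)]
      rw [hTf, if_pos ht0, zero_add, norm_mul, abs_zeta_pow, one_mul, norm_pow,
        Complex.norm_two, hgoal]
end

section
/- Let k ≥ 1, let f_0, f_1, …, f_{k−1} : F_{2^n} → F_2 be Boolean functions, let f : F_{2^n} → Z_{2^k} be f(x) = Σ_{j=0}^{k−1} 2^j f_j(x), and for c = (c_0, …, c_{k−2}) ∈ F_2^{k−1} let f_c(x) = c_0 f_0(x) ⊕ ⋯ ⊕ c_{k−2} f_{k−2}(x) ⊕ f_{k−1}(x) and ι(c) = Σ_{j=0}^{k−2} c_j 2^j. Then for every integer i with gcd(i, 2^n − 1) = 1 and every a ∈ F_{2^n}, H_{f,i}(a) = 2^{−(k−1)} Σ_{(c,d) ∈ F_2^{k−1} × F_2^{k−1}}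 (−1)^{c·d} ζ^{ι(d)} W_{f_c, i}(a), where ζ = e^{2πi/2^k}, c·d = Σ_{j=0}^{k−2} c_j d_j, and W_{g,i}(a) = Σ_{x ∈ F_{2^n}} (−1)^{g(x) ⊕ Tr(a x^i)} is the extended Walsh–Hadamard transform of the Boolean function g. -/
open scoped BigOperators

private lemma zmod2_val_le (a : ZMod 2) : a.val ≤ 1 := Nat.lt_succ_iff.mp (ZMod.val_lt a)

private lemma chi_add (a b : ZMod 2) :
    ((-1 : ℂ)) ^ (a + b).val = (-1) ^ a.val * (-1) ^ b.val := by
  rw [ZMod.val_add, ← neg_one_pow_eq_pow_mod_two, pow_add]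

private lemma chi_mul (a b : ZMod 2) :
    ((-1 : ℂ)) ^ (a * b).val = (-1) ^ (a.val * b.val) := by
  rw [ZMod.val_mul, ← neg_one_pow_eq_pow_mod_two]

private lemma chi_sum {ι : Type*} (s : Finset ι) (g : ι → ZMod 2) :
    ((-1 : ℂ)) ^ (∑ j ∈ s, g j).val = ∏ j ∈ s, (-1) ^ (g j).val := by
  induction s using Finset.cons_induction with
  | empty => simp
  | cons a s ha ih => rw [Finset.sum_cons, Finset.prod_cons, chi_add, ih]

private lemma zeta_pow_half (k : ℕ) (hk : 1 ≤ k) : zeta (2 ^ k) ^ (2 ^ (k - 1)) = -1 := by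
  have h2 : ((2 : ℂ)) ^ (k - 1) ≠ 0 := pow_ne_zero _ two_ne_zero
  rw [zeta, ← Complex.exp_nat_mul, ← Complex.exp_pi_mul_I]
  congr 1
  have hck : ((2 : ℂ)) ^ k = 2 ^ (k - 1) * 2 := by
    rw [← pow_succ, Nat.sub_add_cancel hk]
  push_cast
  rw [hck]
  field_simp

private lemma sum_chi {m : ℕ} (v : Fin m → ZMod 2) :
    (∑ c : Fin m → ZMod 2, ((-1 : ℂ)) ^ (∑ j, c j * v j).val)
      = if v = 0 then (2 : ℂ) ^ m else 0 := by
  have huniv : (Finset.univ : Finset (ZMod 2)) = {0, 1} := by decide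
  calc (∑ c : Fin m → ZMod 2, ((-1 : ℂ)) ^ (∑ j, c j * v j).val)
      = ∑ c : Fin m → ZMod 2, ∏ j, ((-1 : ℂ)) ^ ((c j) * (v j)).val := by
        refine Finset.sum_congr rfl fun c _ => ?_
        exact chi_sum Finset.univ fun j => c j * v j
    _ = ∏ j, ∑ a : ZMod 2, ((-1 : ℂ)) ^ ((a * v j)).val := by
        rw [Fintype.prod_sum fun j a => ((-1 : ℂ)) ^ ((a * v j)).val]
    _ = ∏ j, (1 + ((-1 : ℂ)) ^ (v j).val) := by
        refine Finset.prod_congr rfl fun j _ => ?_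
        rw [huniv, Finset.sum_pair (by decide : (0 : ZMod 2) ≠ 1)]
        simp
    _ = if v = 0 then (2 : ℂ) ^ m else 0 := by
        by_cases hv : v = 0
        · simp only [hv]; norm_num
        · rw [if_neg hv]
          obtain ⟨j, hj⟩ := Function.ne_iff.mp hv
          refine Finset.prod_eq_zero (Finset.mem_univ j) ?_
          have : v j = 1 := by
            have := ZMod.val_lt (v j)
            interval_cases h : (v j).val
            · exact absurd ((ZMod.val_eq_zero _).mp h) hj
            · exact (ZMod.val_eq_one (by norm_num) _).mp h
          simp [this, ZMod.val_one]

private lemma key (k : ℕ) (hk : 1 ≤ k) (b : ℕ → ZMod 2) :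
    (zeta (2 ^ k)) ^ (∑ j ∈ Finset.range k,
        (2 ^ j : ZMod (2 ^ k)) * (((b j).val : ZMod (2 ^ k)))).val
      = ((2 : ℂ) ^ (k - 1))⁻¹ *
        ∑ c : Fin (k - 1) → ZMod 2, ∑ d : Fin (k - 1) → ZMod 2,
          (-1 : ℂ) ^ (∑ j : Fin (k - 1), (c j).val * (d j).val) *
            zeta (2 ^ k) ^ (∑ j : Fin (k - 1), (d j).val * 2 ^ (j : ℕ)) *
            (-1 : ℂ) ^ ((∑ j : Fin (k - 1), c j * b (j : ℕ)) + b (k - 1)).val := by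
  set m := k - 1 with hm
  have hq : (2 : ℕ) ^ k ≠ 0 := by positivity
  haveI : NeZero ((2:ℕ) ^ k) := ⟨hq⟩
  have hval : (∑ j ∈ Finset.range k,
      (2 ^ j : ZMod (2 ^ k)) * (((b j).val : ZMod (2 ^ k)))).val
      = ∑ j ∈ Finset.range k, 2 ^ j * (b j).val := by
    have hc : (∑ j ∈ Finset.range k, (2 ^ j : ZMod (2 ^ k)) * (((b j).val : ZMod (2 ^ k))))
        = (((∑ j ∈ Finset.range k, 2 ^ j * (b j).val : ℕ)) : ZMod (2 ^ k)) := by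
      push_cast; ring
    rw [hc, ZMod.val_natCast, Nat.mod_eq_of_lt]
    calc ∑ j ∈ Finset.range k, 2 ^ j * (b j).val
        ≤ ∑ j ∈ Finset.range k, 2 ^ j := by
          refine Finset.sum_le_sum fun j _ => ?_
          calc 2 ^ j * (b j).val ≤ 2 ^ j * 1 :=
            Nat.mul_le_mul_left _ (zmod2_val_le _)
          _ = 2 ^ j := by ring
      _ < 2 ^ k := Nat.geomSum_lt le_rfl fun j hj => Finset.mem_range.mp hj
  have hksucc : k = m + 1 := by omega
  have hLHS : (zeta (2 ^ k)) ^ (∑ j ∈ Finset.range k,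
      (2 ^ j : ZMod (2 ^ k)) * (((b j).val : ZMod (2 ^ k)))).val
      = zeta (2 ^ k) ^ (∑ j ∈ Finset.range m, 2 ^ j * (b j).val)
        * (-1 : ℂ) ^ (b m).val := by
    have hz : zeta (2 ^ k) ^ 2 ^ m = -1 := by rw [hm]; exact zeta_pow_half k hk
    rw [hval, show Finset.range k = Finset.range (m + 1) from by rw [hksucc],
      Finset.sum_range_succ, pow_add, pow_mul, hz]
  rw [hLHS]
  have hstep : ∀ d : Fin m → ZMod 2,
      (∑ c : Fin m → ZMod 2,
        (-1 : ℂ) ^ (∑ j : Fin m, (c j).val * (d j).val) *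
          zeta (2 ^ k) ^ (∑ j : Fin m, (d j).val * 2 ^ (j : ℕ)) *
          (-1 : ℂ) ^ ((∑ j : Fin m, c j * b (j : ℕ)) + b (k - 1)).val)
      = (if d = (fun j : Fin m => b (j : ℕ)) then
          (2:ℂ) ^ m * zeta (2 ^ k) ^ (∑ j : Fin m, (d j).val * 2 ^ (j : ℕ)) *
            (-1 : ℂ) ^ (b (k-1)).val
        else 0) := by
    intro d
    have h1 : ∀ c : Fin m → ZMod 2,
        (-1 : ℂ) ^ (∑ j : Fin m, (c j).val * (d j).val) *
          zeta (2 ^ k) ^ (∑ j : Fin m, (d j).val * 2 ^ (j : ℕ)) *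
          (-1 : ℂ) ^ ((∑ j : Fin m, c j * b (j : ℕ)) + b (k - 1)).val
        = zeta (2 ^ k) ^ (∑ j : Fin m, (d j).val * 2 ^ (j : ℕ)) *
            (-1 : ℂ) ^ (b (k-1)).val *
          (-1 : ℂ) ^ (∑ j : Fin m, c j * (d j + b (j : ℕ))).val := by
      intro c
      rw [chi_add, chi_sum]
      have h2 : (-1 : ℂ) ^ (∑ j : Fin m, (c j).val * (d j).val)
          = ∏ j : Fin m, (-1 : ℂ) ^ ((c j).val * (d j).val) :=
        (Finset.prod_pow_eq_pow_sum _ _ _).symm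
      rw [h2, chi_sum]
      have h3 : (∏ j : Fin m, (-1 : ℂ) ^ ((c j).val * (d j).val)) *
          (∏ j : Fin m, (-1 : ℂ) ^ (c j * b (j : ℕ)).val)
          = ∏ j : Fin m, (-1 : ℂ) ^ (c j * (d j + b (j : ℕ))).val := by
        rw [← Finset.prod_mul_distrib]
        refine Finset.prod_congr rfl fun j _ => ?_
        rw [mul_add, chi_add, chi_mul, chi_mul]
      calc (∏ j : Fin m, (-1 : ℂ) ^ ((c j).val * (d j).val)) *
            zeta (2 ^ k) ^ (∑ j : Fin m, (d j).val * 2 ^ (j : ℕ)) *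
            ((∏ j : Fin m, (-1 : ℂ) ^ (c j * b (j : ℕ)).val) *
              (-1 : ℂ) ^ (b (k-1)).val)
          = zeta (2 ^ k) ^ (∑ j : Fin m, (d j).val * 2 ^ (j : ℕ)) *
              (-1 : ℂ) ^ (b (k-1)).val *
            ((∏ j : Fin m, (-1 : ℂ) ^ ((c j).val * (d j).val)) *
              (∏ j : Fin m, (-1 : ℂ) ^ (c j * b (j : ℕ)).val)) := by ring
        _ = _ := by rw [h3]
    rw [Finset.sum_congr rfl fun c _ => h1 c, ← Finset.mul_sum, sum_chi]
    have hiff : ((fun j : Fin m => d j + b (j : ℕ)) = 0)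
        ↔ d = (fun j : Fin m => b (j : ℕ)) := by
      constructor
      · intro h
        funext j
        have hj := congrFun h j
        simp only [Pi.zero_apply] at hj
        have h2 := add_eq_zero_iff_eq_neg.mp hj
        rwa [CharTwo.neg_eq] at h2
      · intro h
        funext j
        simp only [Pi.zero_apply, congrFun h j]
        exact CharTwo.add_self_eq_zero _
    by_cases hd : d = (fun j : Fin m => b (j : ℕ))
    · rw [if_pos (hiff.mpr hd), if_pos hd]; ring
    · rw [if_neg (fun h => hd (hiff.mp h)), if_neg hd, mul_zero]
  rw [Finset.sum_comm]
  rw [Finset.sum_congr rfl fun d _ => hstep d, Finset.sum_ite_eq' Finset.univ _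
    (fun d : Fin m → ZMod 2 => (2:ℂ) ^ m * zeta (2 ^ k) ^ (∑ j : Fin m, (d j).val * 2 ^ (j : ℕ)) *
      (-1 : ℂ) ^ (b (k-1)).val)]
  rw [if_pos (Finset.mem_univ _)]
  have hexp : (∑ j : Fin m, ((b (j : ℕ)).val * 2 ^ (j : ℕ)))
      = ∑ j ∈ Finset.range m, 2 ^ j * (b j).val := by
    rw [Fin.sum_univ_eq_sum_range (fun j => (b j).val * 2 ^ j) m]
    exact Finset.sum_congr rfl fun j _ => mul_comm _ _
  rw [hexp]
  have h2m : ((2:ℂ) ^ m) ≠ 0 := pow_ne_zero _ two_ne_zero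
  field_simp
  ring

theorem statement_11 (n k : ℕ) (hn : 1 ≤ n) (hk : 1 ≤ k)
    (fj : ℕ → GaloisField 2 n → ZMod 2)
    (f : GaloisField 2 n → ZMod (2 ^ k))
    (hf : ∀ x, f x = ∑ j ∈ Finset.range k,
      (2 ^ j : ZMod (2 ^ k)) * ((fj j x).val : ZMod (2 ^ k)))
    (i : ℕ) (hi : Nat.Coprime i (2 ^ n - 1)) (a : GaloisField 2 n) :
    egwht n (2 ^ k) f i a =
      ((2 : ℂ) ^ (k - 1))⁻¹ *
        ∑ c : Fin (k - 1) → ZMod 2, ∑ d : Fin (k - 1) → ZMod 2,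
          (-1 : ℂ) ^ (∑ j : Fin (k - 1), (c j).val * (d j).val) *
            zeta (2 ^ k) ^ (∑ j : Fin (k - 1), (d j).val * 2 ^ (j : ℕ)) *
            bwhtExt n (fun x => (∑ j : Fin (k - 1), c j * fj j x) + fj (k - 1) x) i a := by
  simp only [egwht, bwhtExt]
  have hpt : ∀ x : GaloisField 2 n,
      zeta (2 ^ k) ^ (f x).val *
        (-1 : ℂ) ^ (Algebra.trace (ZMod 2) (GaloisField 2 n) (a * x ^ i)).val
      = ∑ c : Fin (k-1) → ZMod 2, ∑ d : Fin (k-1) → ZMod 2,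
          ((2 : ℂ) ^ (k - 1))⁻¹ *
          ((-1 : ℂ) ^ (∑ j : Fin (k-1), (c j).val * (d j).val) *
            zeta (2 ^ k) ^ (∑ j : Fin (k-1), (d j).val * 2 ^ (j:ℕ)) *
            (-1 : ℂ) ^ ((∑ j : Fin (k-1), c j * fj j x) + fj (k-1) x
              + Algebra.trace (ZMod 2) (GaloisField 2 n) (a * x ^ i)).val) := by
    intro x
    rw [hf x, key k hk (fun j => fj j x)]
    simp only [Finset.mul_sum, Finset.sum_mul]
    refine Finset.sum_congr rfl fun c _ => Finset.sum_congr rfl fun d _ => ?_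
    simp only [chi_add]
    ring
  rw [Finset.sum_congr rfl fun x _ => hpt x]
  simp only [Finset.mul_sum]
  rw [Finset.sum_comm]
  refine Finset.sum_congr rfl fun c _ => ?_
  rw [Finset.sum_comm]
end
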